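/- Sufficient conditions for the bounded strong completeness assumption (paper's appendix lemma in Section S.1.6): let Z be a real random variable, D a {0,1}-valued random variable, W a real random variable; let κ be the conditional distribution of (Z,D) given W and μ_W the law of W. Let ω : ℝ×ℝ×ℝ → [0,∞) be bounded measurable with 0 < ∫ ω(z,d,w) dκ(w)(z,d) for μ_W-almost every w, and define the reweighted distribution ν on ℝ² by ν(B) = ∫ [ ∫_B ω(z,d,w) dκ(w)(z,d) / ∫ ω(z,d,w) dκ(w)(z,d) ] dμ_W(w) for Borel B ⊆ ℝ². Assume: (i) (bounded completeness) for every bounded measurable g : ℝ² → ℝ, if ∫ g(z,d)·ω(z,d,w) dκ(w)(z,d) = 0 for μ_W-almost every w, then ν({(z,d) : g(z,d) ≠ 0}) = 0; (ii) (absolute continuity) every Borel B ⊆ ℝ² with ν(B) = 0 satisfies P((Z,D) ∈ B) = 0. Then for every bounded measurable f : ℝ² → ℝ: if E[f(Z,D)·ω(Z,D,W) | σ(W)] = 0 almost surely, then f(Z,D) = 0 almost surely. -/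

import Mathlib

open MeasureTheory ProbabilityTheory Set

/-- Sufficient conditions for the bounded strong completeness assumption (paper's
appendix lemma in Section S.1.6). Here `κ` is the conditional distribution of `(Z,D)`
given `W`, and the reweighted distribution `ν` is expressed via its defining formula
`ν(B) = ∫ [∫_B ω dκ(w)] / [∫ ω dκ(w)] dμ_W(w)`. -/
theorem bounded_completeness_sufficient_conditions
    {Ω : Type*} [MeasureSpace Ω] [IsProbabilityMeasure (ℙ : Measure Ω)]
    (Z D W : Ω → ℝ)
    (hZ : Measurable Z) (hD : Measurable D) (hW : Measurable W)
    (hD01 : ∀ ω, D ω = 0 ∨ D ω = 1)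
    (ωf : ℝ → ℝ → ℝ → ℝ)
    (hωmeas : Measurable fun p : ℝ × ℝ × ℝ => ωf p.1 p.2.1 p.2.2)
    (hωnn : ∀ z d w, 0 ≤ ωf z d w)
    (hωbdd : ∃ M, ∀ z d w, ωf z d w ≤ M)
    (hωpos : ∀ᵐ w ∂(Measure.map W ℙ),
      0 < ∫ p : ℝ × ℝ, ωf p.1 p.2 w ∂(condDistrib (fun ω => (Z ω, D ω)) W ℙ w))
    -- (i) bounded completeness for the reweighted family
    (hcomplete : ∀ g : ℝ × ℝ → ℝ, Measurable g → (∃ M, ∀ p, |g p| ≤ M) →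
      (∀ᵐ w ∂(Measure.map W ℙ),
        (∫ p : ℝ × ℝ, g p * ωf p.1 p.2 w ∂(condDistrib (fun ω => (Z ω, D ω)) W ℙ w)) = 0) →
      (∫⁻ w, (∫⁻ p in {p : ℝ × ℝ | g p ≠ 0}, ENNReal.ofReal (ωf p.1 p.2 w)
                ∂(condDistrib (fun ω => (Z ω, D ω)) W ℙ w))
            / (∫⁻ p : ℝ × ℝ, ENNReal.ofReal (ωf p.1 p.2 w)
                ∂(condDistrib (fun ω => (Z ω, D ω)) W ℙ w))
          ∂(Measure.map W ℙ)) = 0)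
    -- (ii) absolute continuity of the law of (Z,D) w.r.t. ν
    (habscont : ∀ B : Set (ℝ × ℝ), MeasurableSet B →
      (∫⁻ w, (∫⁻ p in B, ENNReal.ofReal (ωf p.1 p.2 w)
                ∂(condDistrib (fun ω => (Z ω, D ω)) W ℙ w))
            / (∫⁻ p : ℝ × ℝ, ENNReal.ofReal (ωf p.1 p.2 w)
                ∂(condDistrib (fun ω => (Z ω, D ω)) W ℙ w))
          ∂(Measure.map W ℙ)) = 0 →
      ℙ {ω | (Z ω, D ω) ∈ B} = 0) :
    ∀ f : ℝ × ℝ → ℝ, Measurable f → (∃ M, ∀ p, |f p| ≤ M) →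
      (ℙ[fun ω => f (Z ω, D ω) * ωf (Z ω) (D ω) (W ω)
          | MeasurableSpace.comap W inferInstance] =ᵐ[ℙ] 0) →
      (fun ω => f (Z ω, D ω)) =ᵐ[ℙ] 0 := by
  obtain ⟨Mω, hMω⟩ := hωbdd
  intro f hf hfbdd hcond
  obtain ⟨Mf, hMf⟩ := hfbdd
  have hMf0 : 0 ≤ Mf := le_trans (abs_nonneg _) (hMf (0, 0))
  set κ := condDistrib (fun ω => (Z ω, D ω)) W ℙ with hκ
  have hZD : Measurable fun ω => (Z ω, D ω) := hZ.prodMk hD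
  set F : ℝ × (ℝ × ℝ) → ℝ := fun q => f q.2 * ωf q.2.1 q.2.2 q.1 with hFdef
  have hFmeas : Measurable F := by
    refine (hf.comp measurable_snd).mul ?_
    exact hωmeas.comp ((measurable_fst.comp measurable_snd).prodMk
      ((measurable_snd.comp measurable_snd).prodMk measurable_fst))
  have hFcomp : Measurable fun a => F (W a, (Z a, D a)) :=
    hFmeas.comp (hW.prodMk hZD)
  have hbound : ∀ a, ‖F (W a, (Z a, D a))‖ ≤ Mf * Mω := by
    intro a
    have h1 : |f (Z a, D a) * ωf (Z a) (D a) (W a)|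
        = |f (Z a, D a)| * ωf (Z a) (D a) (W a) := by
      rw [abs_mul, abs_of_nonneg (hωnn _ _ _)]
    rw [Real.norm_eq_abs]
    calc |F (W a, (Z a, D a))| = |f (Z a, D a)| * ωf (Z a) (D a) (W a) := h1
      _ ≤ Mf * Mω := mul_le_mul (hMf _) (hMω _ _ _) (hωnn _ _ _) hMf0
  have hint : Integrable (fun a => F (W a, (Z a, D a))) ℙ :=
    (integrable_const (Mf * Mω)).mono' hFcomp.aestronglyMeasurable
      (Filter.Eventually.of_forall hbound)
  have h := condExp_prod_ae_eq_integral_condDistrib hW hZD.aemeasurable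
    hFmeas.stronglyMeasurable hint
  have h0 : (fun a => ∫ p, F (W a, p) ∂κ (W a)) =ᵐ[ℙ] 0 := h.symm.trans hcond
  have hGmeas : Measurable fun w => ∫ p, F (w, p) ∂κ w :=
    (hFmeas.stronglyMeasurable.integral_kernel_prod_right' (κ := κ)).measurable
  have hae : ∀ᵐ w ∂(Measure.map W ℙ), (∫ p, F (w, p) ∂κ w) = 0 := by
    refine (MeasureTheory.ae_map_iff hW.aemeasurable ?_).mpr h0
    exact hGmeas (measurableSet_singleton 0)
  have hnu := hcomplete f hf ⟨Mf, hMf⟩ hae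
  have hP := habscont {p | f p ≠ 0} (hf (measurableSet_singleton 0)).compl hnu
  rw [Filter.eventuallyEq_iff_exists_mem]
  refine ⟨{ω | (Z ω, D ω) ∈ {p | f p ≠ 0}}ᶜ, ?_, fun ω hω => not_not.mp hω⟩
  rw [mem_ae_iff, compl_compl]
  exact hP
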